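/- Let G = (E, V) be a locally finite weighted graph and suppose there is a sequence (x_n)_{n ∈ ℕ} of vertices such that Σ_{y ~ x_n} E(y, x_n)² → ∞ and (Σ_{y ~ x_n} E(y, x_n))² / Σ_{y ~ x_n} E(y, x_n)² → ∞ as n → ∞. Then the domains of the closed operators Δ_G and A_G are different: 𝒟(Δ_G) ≠ 𝒟(A_G). In particular, if G is a simple graph of unbounded degree, then 𝒟(Δ_G) ≠ 𝒟(A_G). -/

import Mathlib

/- Common setup: the Hilbert space ℓ²(V), the subspace `C_c` of finitely supported
   functions, essential self-adjointness and deficiency indices for `LinearPMap`s. -/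

noncomputable section

open scoped ENNReal

/-- The Hilbert space ℓ²(V) with complex coefficients. -/
abbrev l2 (V : Type*) := lp (fun _ : V => ℂ) 2

/-- The dense subspace `C_c(G)` of finitely supported functions in ℓ²(V). -/
def Cc (V : Type*) : Submodule ℂ (l2 V) where
  carrier := {f | (Function.support (⇑f : V → ℂ)).Finite}
  add_mem' := by
    intro f g hf hg
    exact ((hf.union hg).subset (by rw [lp.coeFn_add]; exact Function.support_add _ _))
  zero_mem' := by
    have h0 : (Function.support (⇑(0 : l2 V) : V → ℂ)) = ∅ := by
      ext x; simp only [Set.mem_empty_iff_false, iff_false, Function.mem_support, not_not]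
      exact congrFun (lp.coeFn_zero _ _) x
    simp only [Set.mem_setOf_eq, h0, Set.finite_empty]
  smul_mem' := by
    intro c f hf
    refine hf.subset ?_
    intro x hx
    simp only [Function.mem_support, lp.coeFn_smul, Pi.smul_apply, smul_eq_mul] at hx ⊢
    intro h0
    exact hx (by rw [h0, mul_zero])

/-- A densely defined operator is essentially self-adjoint if it is closable
and its closure is self-adjoint. -/
def IsEssentiallySelfAdjoint {H : Type*} [NormedAddCommGroup H] [InnerProductSpace ℂ H]
    [CompleteSpace H] (T : H →ₗ.[ℂ] H) : Prop :=
  T.IsClosable ∧ IsSelfAdjoint T.closure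


/-! ### Auxiliary lemmas -/

/-- Evaluation at a point as a continuous linear map on ℓ². -/
def evalCLM {V : Type*} (v : V) : l2 V →L[ℂ] ℂ :=
  LinearMap.mkContinuous
    { toFun := fun f => f v
      map_add' := fun f g => by simp [lp.coeFn_add]
      map_smul' := fun c f => by simp [lp.coeFn_smul] }
    1 (fun f => by
      show ‖(f : V → ℂ) v‖ ≤ 1 * ‖f‖
      simpa using lp.norm_apply_le_norm (by norm_num : (2:ℝ≥0∞) ≠ 0) f v)

@[simp] lemma evalCLM_apply {V : Type*} (v : V) (f : l2 V) : evalCLM v f = f v := rfl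

/-- Closability criterion: pointwise evaluations of `T f` extend to continuous
functionals of `f`. -/
theorem isClosable_of_eval {V : Type*} {T : l2 V →ₗ.[ℂ] l2 V}
    (h : ∀ v : V, ∃ φ : l2 V →L[ℂ] ℂ, ∀ f : T.domain, T f v = φ (f : l2 V)) :
    T.IsClosable := by
  refine ⟨T.graph.topologicalClosure.toLinearPMap,
    (Submodule.toLinearPMap_graph_eq _ ?_).symm⟩
  rintro ⟨a, b⟩ hab (rfl : a = 0)
  have hmem : ((0 : l2 V), b) ∈ closure (T.graph : Set (l2 V × l2 V)) := by
    rw [← Submodule.topologicalClosure_coe]; exact hab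
  rw [mem_closure_iff_seq_limit] at hmem
  obtain ⟨u, hu, hlim⟩ := hmem
  have h1 : Filter.Tendsto (fun n => (u n).1) Filter.atTop (nhds 0) :=
    (continuous_fst.tendsto _).comp hlim
  have h2 : Filter.Tendsto (fun n => (u n).2) Filter.atTop (nhds b) :=
    (continuous_snd.tendsto _).comp hlim
  have hb : ∀ v : V, b v = 0 := by
    intro v
    obtain ⟨φ, hφ⟩ := h v
    have hval : ∀ n, (u n).2 v = φ ((u n).1) := by
      intro n
      obtain ⟨d, hd1, hd2⟩ := (T.mem_graph_iff.mp (hu n))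
      rw [← hd2, hφ d, hd1]
    have t1 : Filter.Tendsto (fun n => (u n).2 v) Filter.atTop (nhds (b v)) :=
      ((evalCLM v).continuous.tendsto _).comp h2
    have t2 : Filter.Tendsto (fun n => (u n).2 v) Filter.atTop (nhds 0) := by
      have := (φ.continuous.tendsto _).comp h1
      simp only [Function.comp_def, map_zero] at this
      exact Filter.Tendsto.congr (fun n => (hval n).symm) this
    exact tendsto_nhds_unique t1 t2
  have : b = 0 := by
    apply lp.ext
    funext v
    simpa using hb v
  exact this

set_option synthInstance.maxHeartbeats 1000000 in
/-- If `S` and `T` are closed with `S.domain ≤ T.domain`, then `T` is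
relatively bounded by `S` on `S.domain` (closed graph theorem). -/
theorem bound_of_closed_le {V : Type*} {T S : l2 V →ₗ.[ℂ] l2 V}
    (hT : T.IsClosed) (hS : S.IsClosed) (hdom : S.domain ≤ T.domain) :
    ∃ C : ℝ, 0 ≤ C ∧ ∀ f : S.domain,
      ‖T ⟨(f : l2 V), hdom f.2⟩‖ ≤ C * (‖(f : l2 V)‖ + ‖S f‖) := by
  set G := S.graph with hG
  haveI : CompleteSpace G := completeSpace_coe_iff_isComplete.mpr hS.isComplete
  have hmem : ∀ g : G, ((g : l2 V × l2 V)).1 ∈ T.domain := by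
    rintro ⟨⟨a, b⟩, hg⟩
    obtain ⟨d, hd1, _⟩ := S.mem_graph_iff.mp hg
    exact hdom (hd1 ▸ d.2)
  let p : G →ₗ[ℂ] l2 V := (LinearMap.fst ℂ (l2 V) (l2 V)).comp G.subtype
  let pd : G →ₗ[ℂ] T.domain := p.codRestrict T.domain hmem
  let ψ : G →ₗ[ℂ] l2 V := T.toFun.comp pd
  have hψval : ∀ g : G, (((g : l2 V × l2 V)).1, ψ g) ∈ T.graph := by
    intro g
    exact T.mem_graph ⟨((g : l2 V × l2 V)).1, hmem g⟩
  have hclosed : IsClosed (ψ.graph : Set (G × l2 V)) := by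
    apply IsSeqClosed.isClosed
    rintro u ⟨g, w⟩ hu hlim
    have h1 : Filter.Tendsto (fun n => (u n).1) Filter.atTop (nhds g) :=
      (continuous_fst.tendsto _).comp hlim
    have h2 : Filter.Tendsto (fun n => (u n).2) Filter.atTop (nhds w) :=
      (continuous_snd.tendsto _).comp hlim
    have h1' : Filter.Tendsto (fun n => (((u n).1 : l2 V × l2 V)).1)
        Filter.atTop (nhds (((g : l2 V × l2 V)).1)) :=
      (continuous_fst.tendsto _).comp ((continuous_subtype_val.tendsto _).comp h1)
    have hgmem : ∀ n, ((((u n).1 : l2 V × l2 V)).1, (u n).2) ∈ T.graph := by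
      intro n
      have h := (LinearMap.mem_graph_iff ψ (u n)).mp (hu n)
      rw [h]
      exact hψval _
    have hlim2 : Filter.Tendsto (fun n => ((((u n).1 : l2 V × l2 V)).1, (u n).2))
        Filter.atTop (nhds (((g : l2 V × l2 V)).1, w)) := h1'.prodMk_nhds h2
    have hwmem : (((g : l2 V × l2 V)).1, w) ∈ T.graph := by
      have : (((g : l2 V × l2 V)).1, w) ∈ closure (T.graph : Set (l2 V × l2 V)) :=
        mem_closure_of_tendsto hlim2 (Filter.Eventually.of_forall hgmem)
      rwa [hT.closure_eq] at this
    rw [SetLike.mem_coe, LinearMap.mem_graph_iff]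
    obtain ⟨d1, hd11, hd12⟩ := T.mem_graph_iff.mp hwmem
    obtain ⟨d2, hd21, hd22⟩ := T.mem_graph_iff.mp (hψval g)
    have hd : d1 = d2 := Subtype.ext (hd11.trans hd21.symm)
    show w = ψ g
    have hw : (T d1 : l2 V) = w := hd12
    have hg2 : (T d2 : l2 V) = ψ g := hd22
    rw [← hw, hd, hg2]
  have hcont : Continuous ψ := ψ.continuous_of_isClosed_graph hclosed
  let Ψ : G →L[ℂ] l2 V := ⟨ψ, hcont⟩
  refine ⟨‖Ψ‖, Ψ.opNorm_nonneg, ?_⟩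
  intro f
  set g : G := ⟨((f : l2 V), S f), S.mem_graph f⟩ with hg'
  have hψg : ψ g = T ⟨(f : l2 V), hdom f.2⟩ := rfl
  have hb := Ψ.le_opNorm g
  have hng : ‖g‖ ≤ ‖(f : l2 V)‖ + ‖S f‖ := by
    have : ‖g‖ = max ‖(f : l2 V)‖ ‖S f‖ := rfl
    rw [this]
    exact max_le (le_add_of_nonneg_right (norm_nonneg _))
      (le_add_of_nonneg_left (norm_nonneg _))
  calc ‖T ⟨(f : l2 V), hdom f.2⟩‖ = ‖Ψ g‖ := by rw [← hψg]; rfl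
    _ ≤ ‖Ψ‖ * ‖g‖ := hb
    _ ≤ ‖Ψ‖ * (‖(f : l2 V)‖ + ‖S f‖) := by
        exact mul_le_mul_of_nonneg_left hng Ψ.opNorm_nonneg

lemma l2_norm_sq_eq {V : Type*} (g : l2 V) (S : Finset V) (h : ∀ z ∉ S, g z = 0) :
    ‖g‖ ^ 2 = ∑ z ∈ S, ‖g z‖ ^ 2 := by
  have hp : 0 < (2:ℝ≥0∞).toReal := by norm_num
  have hnorm := lp.norm_rpow_eq_tsum hp g
  have h2 : (2:ℝ≥0∞).toReal = (2:ℝ) := by norm_num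
  rw [h2] at hnorm
  have hts : ∑' i, ‖g i‖ ^ (2:ℝ) = ∑ z ∈ S, ‖g z‖ ^ (2:ℝ) :=
    tsum_eq_sum (fun b hb => by rw [h b hb]; simp [Real.zero_rpow])
  rw [hts] at hnorm
  calc ‖g‖ ^ 2 = ‖g‖ ^ (2:ℝ) := by
        rw [← Real.rpow_natCast ‖g‖ 2]; norm_num
    _ = ∑ z ∈ S, ‖g z‖ ^ (2:ℝ) := hnorm
    _ = ∑ z ∈ S, ‖g z‖ ^ 2 := by
        refine Finset.sum_congr rfl fun z _ => ?_
        rw [← Real.rpow_natCast ‖g z‖ 2]; norm_num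

lemma l2_norm_single {V : Type*} [DecidableEq V] (v : V) :
    ‖(lp.single 2 v (1:ℂ) : l2 V)‖ = 1 := by
  have := lp.norm_single (E := fun _ : V => ℂ) (p := 2) (by norm_num)
    v (1:ℂ)
  simpa using this

set_option maxHeartbeats 1000000 in
set_option synthInstance.maxHeartbeats 1000000 in
theorem stmt6 {V : Type*} [Countable V] (E : V → V → ℝ)
    (hEsymm : ∀ x y, E x y = E y x) (hEpos : ∀ x y, 0 ≤ E x y)
    (hEloop : ∀ x, E x x = 0)
    (hlocfin : ∀ x, {y | E x y ≠ 0}.Finite)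
    (hcase :
      (∃ x : ℕ → V,
        Filter.Tendsto (fun n => ∑ᶠ y, E y (x n) ^ 2) Filter.atTop Filter.atTop ∧
        Filter.Tendsto (fun n => (∑ᶠ y, E y (x n)) ^ 2 / ∑ᶠ y, E y (x n) ^ 2)
          Filter.atTop Filter.atTop) ∨
      ((∀ x y, E x y = 0 ∨ E x y = 1) ∧
        ∀ N : ℕ, ∃ x, N ≤ Nat.card {z | E x z ≠ 0}))
    (A Δ : l2 V →ₗ.[ℂ] l2 V)
    (hdomA : A.domain = Cc V)
    (hA : ∀ f : A.domain, ∀ x : V,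
      A f x = ∑ᶠ y, (E x y : ℂ) * (f : l2 V) y)
    (hdomΔ : Δ.domain = Cc V)
    (hΔ : ∀ f : Δ.domain, ∀ x : V,
      Δ f x = ∑ᶠ y, (E x y : ℂ) * ((f : l2 V) x - (f : l2 V) y)) :
    Δ.closure.domain ≠ A.closure.domain := by
  classical
  intro hdomeq
  -- Step A : extract a sequence satisfying the two divergence conditions
  obtain ⟨x, hs, hr⟩ : ∃ x : ℕ → V,
      Filter.Tendsto (fun n => ∑ᶠ y, E y (x n) ^ 2) Filter.atTop Filter.atTop ∧
      Filter.Tendsto (fun n => (∑ᶠ y, E y (x n)) ^ 2 / ∑ᶠ y, E y (x n) ^ 2)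
        Filter.atTop Filter.atTop := by
    rcases hcase with h | ⟨hsimple, hdeg⟩
    · exact h
    · choose x hx using hdeg
      have hcard : ∀ n : ℕ, (n : ℝ) ≤ ((hlocfin (x n)).toFinset.card : ℝ) := by
        intro n
        have h1 : Nat.card {z | E (x n) z ≠ 0} = (hlocfin (x n)).toFinset.card := by
          rw [Nat.card_coe_set_eq, Set.ncard_eq_toFinset_card _ (hlocfin (x n))]
        exact_mod_cast (h1 ▸ hx n)
      have hsum : ∀ n, (∑ᶠ y, E y (x n)) = ((hlocfin (x n)).toFinset.card : ℝ) ∧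
          (∑ᶠ y, E y (x n) ^ 2) = ((hlocfin (x n)).toFinset.card : ℝ) := by
        intro n
        have hsubt : Function.support (fun y => E y (x n)) ⊆
            ↑(hlocfin (x n)).toFinset := by
          intro y hy
          simp only [Function.mem_support] at hy
          rw [hEsymm y (x n)] at hy
          simpa [Set.Finite.mem_toFinset] using hy
        have hsubs : Function.support (fun y => E y (x n) ^ 2) ⊆
            ↑(hlocfin (x n)).toFinset := by
          intro y hy
          simp only [Function.mem_support] at hy
          have hE : E y (x n) ≠ 0 := fun h0 => hy (by rw [h0]; simp)
          rw [hEsymm y (x n)] at hE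
          simpa [Set.Finite.mem_toFinset] using hE
        have hone : ∀ z ∈ (hlocfin (x n)).toFinset, E z (x n) = 1 := by
          intro z hz
          have hz' : E (x n) z ≠ 0 := (hlocfin (x n)).mem_toFinset.mp hz
          rcases hsimple (x n) z with h | h
          · exact absurd h hz'
          · rw [hEsymm z (x n), h]
        constructor
        · rw [finsum_eq_sum_of_support_subset _ hsubt,
            Finset.sum_congr rfl (fun z hz => hone z hz)]
          simp
        · have hone2 : ∀ z ∈ (hlocfin (x n)).toFinset, E z (x n) ^ 2 = 1 := by
            intro z hz
            rw [hone z hz]; norm_num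
          rw [finsum_eq_sum_of_support_subset _ hsubs,
            Finset.sum_congr rfl hone2]
          simp
      refine ⟨x, ?_, ?_⟩
      · refine Filter.tendsto_atTop_mono (fun n => ?_) tendsto_natCast_atTop_atTop
        rw [(hsum n).2]; exact hcard n
      · refine Filter.tendsto_atTop_mono' Filter.atTop ?_ tendsto_natCast_atTop_atTop
        filter_upwards [Filter.eventually_ge_atTop 1] with n hn
        rw [(hsum n).1, (hsum n).2]
        have hc := hcard n
        have hc1 : (1:ℝ) ≤ ((hlocfin (x n)).toFinset.card : ℝ) :=
          le_trans (by exact_mod_cast hn) hc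
        have hne : ((hlocfin (x n)).toFinset.card : ℝ) ≠ 0 :=
          ne_of_gt (lt_of_lt_of_le zero_lt_one hc1)
        rw [pow_two, mul_div_assoc, div_self hne, mul_one]
        exact hc
  set t : ℕ → ℝ := fun n => ∑ᶠ y, E y (x n) with ht
  set s : ℕ → ℝ := fun n => ∑ᶠ y, E y (x n) ^ 2 with hsdef
  -- Step B : closability
  have hAc : A.IsClosable := by
    apply isClosable_of_eval
    intro v
    refine ⟨∑ w ∈ (hlocfin v).toFinset, (E v w : ℂ) • evalCLM w, fun f => ?_⟩
    rw [hA f v, finsum_eq_sum_of_support_subset _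
      (s := (hlocfin v).toFinset) ?_]
    · simp
    · intro y hy
      simp only [Function.mem_support] at hy
      have hE : E v y ≠ 0 := fun h0 => hy (by rw [h0]; simp)
      simpa [Set.Finite.mem_toFinset] using hE
  have hΔc : Δ.IsClosable := by
    apply isClosable_of_eval
    intro v
    refine ⟨∑ w ∈ (hlocfin v).toFinset, (E v w : ℂ) • (evalCLM v - evalCLM w),
      fun f => ?_⟩
    rw [hΔ f v, finsum_eq_sum_of_support_subset _
      (s := (hlocfin v).toFinset) ?_]
    · simp [mul_sub]
    · intro y hy
      simp only [Function.mem_support] at hy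
      have hE : E v y ≠ 0 := fun h0 => hy (by rw [h0]; simp)
      simpa [Set.Finite.mem_toFinset] using hE
  -- Step C : closed graph bound
  have hdomle : A.closure.domain ≤ Δ.closure.domain := le_of_eq hdomeq.symm
  obtain ⟨C, hC0, hC⟩ := bound_of_closed_le hΔc.closure_isClosed
    hAc.closure_isClosed hdomle
  -- Step D/E : the key estimate
  have key : ∀ n, t n ≤ C * (1 + Real.sqrt (s n)) := by
    intro n
    set v := x n with hv
    set δ : l2 V := lp.single 2 v (1:ℂ) with hδ
    have hδCc : δ ∈ Cc V := by
      show (Function.support (⇑δ : V → ℂ)).Finite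
      refine (Set.finite_singleton v).subset ?_
      intro y hy
      by_contra hne
      exact hy (lp.single_apply_ne 2 v 1 hne)
    have hδA : δ ∈ A.domain := hdomA.symm ▸ hδCc
    have hδΔ : δ ∈ Δ.domain := hdomΔ.symm ▸ hδCc
    have hδv : δ v = 1 := lp.single_apply_self 2 v 1
    have hδne : ∀ y ≠ v, δ y = 0 := fun y hy => lp.single_apply_ne 2 v 1 hy
    -- value of A at δ
    have hgA : ∀ z, A ⟨δ, hδA⟩ z = (E z v : ℂ) := by
      intro z
      rw [hA ⟨δ, hδA⟩ z]
      have : ∑ᶠ y, (E z y : ℂ) * δ y = (E z v : ℂ) * δ v :=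
        finsum_eq_single _ v (fun y hy => by rw [hδne y hy, mul_zero])
      rw [this, hδv, mul_one]
    -- norm of A δ
    have hsubsq : Function.support (fun y => E y (x n) ^ 2) ⊆
        ↑(hlocfin v).toFinset := by
      intro y hy
      simp only [Function.mem_support] at hy
      have hE : E y (x n) ≠ 0 := fun h0 => hy (by rw [h0]; simp)
      rw [hEsymm y (x n)] at hE
      simpa [Set.Finite.mem_toFinset] using hE
    have hseq : s n = ∑ z ∈ (hlocfin v).toFinset, E z (x n) ^ 2 :=
      finsum_eq_sum_of_support_subset _ hsubsq
    have hnA : ‖A ⟨δ, hδA⟩‖ = Real.sqrt (s n) := by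
      have hsq : ‖A ⟨δ, hδA⟩‖ ^ 2 = s n := by
        rw [l2_norm_sq_eq (A ⟨δ, hδA⟩) (hlocfin v).toFinset ?side]
        case side =>
          intro z hz
          have h0 : E v z = 0 := by
            by_contra hne
            exact hz ((hlocfin v).mem_toFinset.mpr hne)
          have h0' : E z v = 0 := (hEsymm z v).trans h0
          rw [hgA z, h0']
          simp
        · rw [hseq]
          refine Finset.sum_congr rfl fun z _ => ?_
          rw [hgA z]
          simp [Complex.norm_real, sq_abs]
          rfl
      rw [← hsq, Real.sqrt_sq (norm_nonneg _)]
    -- value of Δ at δ at the point v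
    have hgΔ : Δ ⟨δ, hδΔ⟩ v = (t n : ℂ) := by
      rw [hΔ ⟨δ, hδΔ⟩ v]
      have h1 : ∀ y, (E v y : ℂ) * (δ v - δ y) = (E v y : ℂ) := by
        intro y
        by_cases hy : y = v
        · subst hy; simp [hEloop]
        · rw [hδne y hy, hδv, sub_zero, mul_one]
      rw [finsum_congr h1]
      have hsubc : Function.support (fun y => ((E v y : ℝ) : ℂ)) ⊆
          ↑(hlocfin v).toFinset := by
        intro y hy
        simp only [Function.mem_support] at hy
        have hE : E v y ≠ 0 := fun h0 => hy (by rw [h0]; simp)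
        simpa [Set.Finite.mem_toFinset] using hE
      have hsubt : Function.support (fun y => E y (x n)) ⊆
          ↑(hlocfin v).toFinset := by
        intro y hy
        simp only [Function.mem_support] at hy
        rw [hEsymm y (x n)] at hy
        simpa [Set.Finite.mem_toFinset] using hy
      have hteq : t n = ∑ z ∈ (hlocfin v).toFinset, E z (x n) :=
        finsum_eq_sum_of_support_subset _ hsubt
      rw [finsum_eq_sum_of_support_subset _ hsubc, hteq, Complex.ofReal_sum]
      refine Finset.sum_congr rfl fun z _ => by rw [hEsymm z v]
    have ht0 : 0 ≤ t n := finsum_nonneg (fun y => hEpos y (x n))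
    have htle : t n ≤ ‖Δ ⟨δ, hδΔ⟩‖ := by
      have h1 : ‖Δ ⟨δ, hδΔ⟩ v‖ ≤ ‖Δ ⟨δ, hδΔ⟩‖ :=
        lp.norm_apply_le_norm (by norm_num) _ v
      rw [hgΔ] at h1
      rwa [Complex.norm_real, Real.norm_eq_abs, abs_of_nonneg ht0] at h1
    -- transfer through the closures
    have hδAc : δ ∈ A.closure.domain := (A.le_closure).1 hδA
    set fS : A.closure.domain := ⟨δ, hδAc⟩ with hfS
    have hvalA : A ⟨δ, hδA⟩ = A.closure fS := (A.le_closure).2 rfl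
    have hδΔc : δ ∈ Δ.closure.domain := hdomle hδAc
    have hvalΔ : Δ ⟨δ, hδΔ⟩ = Δ.closure ⟨(fS : l2 V), hdomle fS.2⟩ :=
      (Δ.le_closure).2 rfl
    have hineq := hC fS
    rw [← hvalΔ, ← hvalA] at hineq
    have hδ1 : ‖(fS : l2 V)‖ = 1 := l2_norm_single v
    rw [hδ1, hnA] at hineq
    exact le_trans htle hineq
  -- Step F : contradiction
  obtain ⟨n, hn1, hn2⟩ :=
    ((hs.eventually_ge_atTop 1).and (hr.eventually_gt_atTop (4 * C ^ 2))).exists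
  have hs0 : (0:ℝ) < s n := lt_of_lt_of_le one_pos hn1
  have hsq1 : 1 ≤ Real.sqrt (s n) := by
    rw [show (1:ℝ) = Real.sqrt 1 by simp]
    exact Real.sqrt_le_sqrt hn1
  have h1 : t n ≤ 2 * C * Real.sqrt (s n) := by
    calc t n ≤ C * (1 + Real.sqrt (s n)) := key n
      _ ≤ C * (Real.sqrt (s n) + Real.sqrt (s n)) := by
          apply mul_le_mul_of_nonneg_left _ hC0
          linarith
      _ = 2 * C * Real.sqrt (s n) := by ring
  have ht0 : 0 ≤ t n := finsum_nonneg (fun y => hEpos y (x n))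
  have h2 : t n ^ 2 ≤ 4 * C ^ 2 * s n := by
    calc t n ^ 2 ≤ (2 * C * Real.sqrt (s n)) ^ 2 := by
          apply pow_le_pow_left₀ ht0 h1
      _ = 4 * C ^ 2 * (Real.sqrt (s n)) ^ 2 := by ring
      _ = 4 * C ^ 2 * s n := by rw [Real.sq_sqrt hs0.le]
  have h3 : t n ^ 2 / s n ≤ 4 * C ^ 2 := by
    rw [div_le_iff₀ hs0]; linarith
  exact absurd h3 (not_le.mpr hn2)
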